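/- Consider a graph G(n,m) containing two disjoint cliques C_s and C_t of equal size I with exactly one edge between them (joining u∈C_s and v∈C_t), and exactly one edge from each clique to the rest of the graph (via nodes c∈C_s and o∈C_t). If 5 ≤ I < n/4, then Φ(C_s) + Φ(C_t) > Φ(C_s ∪ C_t), where Φ(S) = Σ_{x∈S} (ω_x N − ε_S d_x)/√(ε_S(N−ε_S)d_x(N−d_x)) with N=n−1, ε_S=|S|−1, d_x the degree of x, and ω_x the number of neighbors of x in S\{x}. -/

import Mathlib

set_option maxHeartbeats 1000000


open Finset

/-- The number of neighbors of `x` inside `S \ {x}`. -/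
def innerDeg {V : Type*} [DecidableEq V] (G : SimpleGraph V) [DecidableRel G.Adj]
    (x : V) (S : Finset V) : ℕ := ((S.erase x).filter (G.Adj x)).card

/-- Φ(S) = Σ_{x∈S} (ω_x N − ε_S d_x)/√(ε_S(N−ε_S)d_x(N−d_x)). -/
noncomputable def commPhi {V : Type*} [Fintype V] [DecidableEq V] (G : SimpleGraph V)
    [DecidableRel G.Adj] (S : Finset V) : ℝ :=
  ∑ x ∈ S,
    ((innerDeg G x S : ℝ) * ((Fintype.card V : ℝ) - 1) -
        ((S.card : ℝ) - 1) * (G.degree x : ℝ)) /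
      Real.sqrt (((S.card : ℝ) - 1) * (((Fintype.card V : ℝ) - 1) - ((S.card : ℝ) - 1)) *
        (G.degree x : ℝ) * (((Fintype.card V : ℝ) - 1) - (G.degree x : ℝ)))


lemma sqrtDivLt (a b A B : ℝ) (ha : 0 < a) (hb : 0 ≤ b) (hA : 0 < A) (hB : 0 < B)
    (h : b^2 * A < a^2 * B) : b / Real.sqrt B < a / Real.sqrt A := by
  rw [div_lt_div_iff₀ (Real.sqrt_pos.2 hB) (Real.sqrt_pos.2 hA)]
  have h1 : b * Real.sqrt A = Real.sqrt (b^2 * A) := by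
    rw [Real.sqrt_mul (sq_nonneg b), Real.sqrt_sq hb]
  have h2 : a * Real.sqrt B = Real.sqrt (a^2 * B) := by
    rw [Real.sqrt_mul (sq_nonneg a), Real.sqrt_sq ha.le]
  rw [h1, h2]
  exact Real.sqrt_lt_sqrt (by positivity) h

lemma termLt (I N d w : ℝ) (hI : 5 ≤ I) (hN : 4*I ≤ N)
    (hcase : (d = I-1 ∧ w = I-1) ∨ (d = I ∧ w = I) ∨ (d = I ∧ w = I-1) ∨ (d = I+1 ∧ w = I)) :
    (w*N - (2*I-1)*d) / Real.sqrt ((2*I-1)*(N-(2*I-1))*d*(N-d))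
      < ((I-1)*N - (I-1)*d) / Real.sqrt ((I-1)*(N-(I-1))*d*(N-d)) := by
  have hi1 : (0:ℝ) < I - 1 := by linarith
  have h2i : (0:ℝ) < 2*I - 1 := by linarith
  have hq : (0:ℝ) < N - (2*I-1) := by linarith
  have hr : (0:ℝ) < N - (I-1) := by linarith
  have hni : (0:ℝ) < N - I := by linarith
  have hni1 : (0:ℝ) < N - (I+1) := by linarith
  have hi0 : (0:ℝ) < I := by linarith
  have hi11 : (0:ℝ) < I + 1 := by linarith
  have f1 : I^2 < (I-1)*(2*I-1) := by nlinarith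
  rcases hcase with ⟨hd,hw⟩|⟨hd,hw⟩|⟨hd,hw⟩|⟨hd,hw⟩ <;> rw [hd, hw]
  · -- d = I-1, w = I-1
    refine sqrtDivLt _ _ _ _ ?_ ?_ ?_ ?_ ?_
    · nlinarith [mul_pos hi1 hr]
    · nlinarith [mul_pos hi1 hq]
    · exact mul_pos (mul_pos (mul_pos hi1 hr) hi1) hr
    · exact mul_pos (mul_pos (mul_pos h2i hq) hi1) hr
    · have base : (I-1)*(N-(2*I-1)) < (2*I-1)*(N-(I-1)) := by nlinarith
      have pos : (0:ℝ) < (I-1)^3*(N-(2*I-1))*(N-(I-1))^2 :=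
        mul_pos (mul_pos (pow_pos hi1 3) hq) (pow_pos hr 2)
      nlinarith [mul_lt_mul_of_pos_left base pos]
  · -- d = I, w = I
    refine sqrtDivLt _ _ _ _ ?_ ?_ ?_ ?_ ?_
    · nlinarith [mul_pos hi1 hni]
    · nlinarith [mul_pos hi0 hq]
    · exact mul_pos (mul_pos (mul_pos hi1 hr) hi0) hni
    · exact mul_pos (mul_pos (mul_pos h2i hq) hi0) hni
    · have f2 : (N-(2*I-1))*(N-(I-1)) < (N-I)^2 := by
        nlinarith [mul_pos (show (0:ℝ) < I-2 by linarith) hni]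
      have key : I^2*((N-(2*I-1))*(N-(I-1))) < ((I-1)*(2*I-1))*(N-I)^2 :=
        mul_lt_mul'' f1 f2 (by positivity) (by positivity)
      have pos : (0:ℝ) < I*(I-1)*(N-(2*I-1))*(N-I) :=
        mul_pos (mul_pos (mul_pos hi0 hi1) hq) hni
      nlinarith [mul_lt_mul_of_pos_left key pos]
  · -- d = I, w = I-1
    refine sqrtDivLt _ _ _ _ ?_ ?_ ?_ ?_ ?_
    · nlinarith [mul_pos hi1 hni]
    · nlinarith [mul_le_mul_of_nonneg_left hN hi1.le]
    · exact mul_pos (mul_pos (mul_pos hi1 hr) hi0) hni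
    · exact mul_pos (mul_pos (mul_pos h2i hq) hi0) hni
    · have f2 : (N-(2*I-1))*(N-(I-1)) < (N-I)^2 := by
        nlinarith [mul_pos (show (0:ℝ) < I-2 by linarith) hni]
      have key : I^2*((N-(2*I-1))*(N-(I-1))) < ((I-1)*(2*I-1))*(N-I)^2 :=
        mul_lt_mul'' f1 f2 (by positivity) (by positivity)
      have pos : (0:ℝ) < I*(I-1)*(N-(2*I-1))*(N-I) :=
        mul_pos (mul_pos (mul_pos hi0 hi1) hq) hni
      have h2 : (I*(N-(2*I-1)))^2 * ((I-1)*(N-(I-1))*I*(N-I))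
          < ((I-1)*N - (I-1)*I)^2 * ((2*I-1)*(N-(2*I-1))*I*(N-I)) := by
        linarith [mul_lt_mul_of_pos_left key pos]
      have hb0 : (0:ℝ) ≤ (I-1)*N - (2*I-1)*I := by
        nlinarith [mul_le_mul_of_nonneg_left hN hi1.le]
      have hblt : (I-1)*N - (2*I-1)*I < I*(N-(2*I-1)) := by nlinarith
      have hsq : ((I-1)*N - (2*I-1)*I)^2 ≤ (I*(N-(2*I-1)))^2 := by nlinarith
      have hApos : (0:ℝ) < (I-1)*(N-(I-1))*I*(N-I) :=
        mul_pos (mul_pos (mul_pos hi1 hr) hi0) hni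
      calc ((I-1)*N - (2*I-1)*I)^2 * ((I-1)*(N-(I-1))*I*(N-I))
          ≤ (I*(N-(2*I-1)))^2 * ((I-1)*(N-(I-1))*I*(N-I)) :=
            mul_le_mul_of_nonneg_right hsq hApos.le
        _ < _ := h2
  · -- d = I+1, w = I
    refine sqrtDivLt _ _ _ _ ?_ ?_ ?_ ?_ ?_
    · nlinarith [mul_pos hi1 hni1]
    · nlinarith [mul_le_mul_of_nonneg_left hN hi0.le]
    · exact mul_pos (mul_pos (mul_pos hi1 hr) hi11) hni1
    · exact mul_pos (mul_pos (mul_pos h2i hq) hi11) hni1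
    · have f2 : (N-(2*I-1))*(N-(I-1)) ≤ (N-(I+1))^2 := by
        nlinarith [mul_nonneg (show (0:ℝ) ≤ I-4 by linarith) hni.le]
      have key : I^2*((N-(2*I-1))*(N-(I-1))) < ((I-1)*(2*I-1))*(N-(I+1))^2 := by
        calc I^2*((N-(2*I-1))*(N-(I-1)))
            < ((I-1)*(2*I-1))*((N-(2*I-1))*(N-(I-1))) :=
              mul_lt_mul_of_pos_right f1 (mul_pos hq hr)
          _ ≤ ((I-1)*(2*I-1))*(N-(I+1))^2 :=
              mul_le_mul_of_nonneg_left f2 (by positivity)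
      have pos : (0:ℝ) < (I-1)*(N-(2*I-1))*((I+1)*(N-(I+1))) :=
        mul_pos (mul_pos hi1 hq) (mul_pos hi11 hni1)
      have h2 : (I*(N-(2*I-1)))^2 * ((I-1)*(N-(I-1))*(I+1)*(N-(I+1)))
          < ((I-1)*N - (I-1)*(I+1))^2 * ((2*I-1)*(N-(2*I-1))*(I+1)*(N-(I+1))) := by
        linarith [mul_lt_mul_of_pos_left key pos]
      have hb0 : (0:ℝ) ≤ I*N - (2*I-1)*(I+1) := by
        nlinarith [mul_le_mul_of_nonneg_left hN hi0.le]
      have hblt : I*N - (2*I-1)*(I+1) < I*(N-(2*I-1)) := by nlinarith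
      have hsq : (I*N - (2*I-1)*(I+1))^2 ≤ (I*(N-(2*I-1)))^2 := by nlinarith
      have hApos : (0:ℝ) < (I-1)*(N-(I-1))*(I+1)*(N-(I+1)) :=
        mul_pos (mul_pos (mul_pos hi1 hr) hi11) hni1
      calc (I*N - (2*I-1)*(I+1))^2 * ((I-1)*(N-(I-1))*(I+1)*(N-(I+1)))
          ≤ (I*(N-(2*I-1)))^2 * ((I-1)*(N-(I-1))*(I+1)*(N-(I+1))) :=
            mul_le_mul_of_nonneg_right hsq hApos.le
        _ < _ := h2

lemma sideCounts {V : Type*} [Fintype V] [DecidableEq V] (G : SimpleGraph V) [DecidableRel G.Adj]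
    (C D : Finset V) (hdisj : Disjoint C D) (hcliq : G.IsClique (C : Set V))
    (u v : V) (hu : u ∈ C) (hv : v ∈ D) (huv : G.Adj u v)
    (hcross : ∀ x ∈ C, ∀ y ∈ D, G.Adj x y → x = u ∧ y = v)
    (c : V) (hc : c ∈ C) (hcadj : ∃ w, w ∉ C ∪ D ∧ G.Adj c w)
    (hout : ((C ×ˢ (univ \ (C ∪ D))).filter (fun pr => G.Adj pr.1 pr.2)).card = 1)
    (x : V) (hx : x ∈ C) :
    innerDeg G x C = C.card - 1 ∧
    innerDeg G x (C ∪ D) = C.card - 1 + (if x = u then 1 else 0) ∧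
    G.degree x = C.card - 1 + (if x = u then 1 else 0) + (if x = c then 1 else 0) := by
  have hxD : x ∉ D := fun h => (disjoint_left.1 hdisj hx) h
  have h1 : (C.erase x).filter (G.Adj x) = C.erase x := by
    refine filter_true_of_mem (fun y hy => ?_)
    exact hcliq hx (mem_of_mem_erase hy) (Ne.symm (mem_erase.1 hy).1)
  have hD : D.filter (G.Adj x) = if x = u then {v} else ∅ := by
    split_ifs with hxu
    · subst hxu
      ext y
      simp only [mem_filter, mem_singleton]
      constructor
      · rintro ⟨hy, hadj⟩; exact (hcross x hx y hy hadj).2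
      · rintro rfl; exact ⟨hv, huv⟩
    · refine filter_false_of_mem (fun y hy hadj => hxu (hcross x hx y hy hadj).1)
  have hinC : innerDeg G x C = C.card - 1 := by
    rw [innerDeg, h1, card_erase_of_mem hx]
  have herU : (C ∪ D).erase x = (C.erase x) ∪ D := by
    rw [erase_union_distrib, erase_eq_of_notMem hxD]
  have hinU : innerDeg G x (C ∪ D) = C.card - 1 + (if x = u then 1 else 0) := by
    rw [innerDeg, herU, filter_union, card_union_of_disjoint, h1, card_erase_of_mem hx, hD]
    · split_ifs <;> simp
    · exact Disjoint.mono ((filter_subset _ _).trans (erase_subset _ _)) (filter_subset _ _) hdisj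
  refine ⟨hinC, hinU, ?_⟩
  -- degree
  set R := (univ \ (C ∪ D)) with hR
  have hsum : ∑ z ∈ C, (R.filter (G.Adj z)).card = 1 := by
    rw [← hout, card_filter, Finset.sum_product]
    exact Finset.sum_congr rfl (fun z _ => card_filter _ _)
  have hec : 1 ≤ (R.filter (G.Adj c)).card := by
    obtain ⟨w, hw, hadjw⟩ := hcadj
    exact card_pos.2 ⟨w, mem_filter.2 ⟨mem_sdiff.2 ⟨mem_univ w, hw⟩, hadjw⟩⟩
  have hsplit : (R.filter (G.Adj c)).card + ∑ z ∈ C.erase c, (R.filter (G.Adj z)).card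
      = ∑ z ∈ C, (R.filter (G.Adj z)).card := Finset.add_sum_erase C (fun z => (R.filter (G.Adj z)).card) hc
  have hecc : (R.filter (G.Adj c)).card = 1 := by omega
  have hrest : ∑ z ∈ C.erase c, (R.filter (G.Adj z)).card = 0 := by omega
  have hex : (R.filter (G.Adj x)).card = if x = c then 1 else 0 := by
    split_ifs with hxc
    · subst hxc; exact hecc
    · exact (Finset.sum_eq_zero_iff.1 hrest) x (mem_erase.2 ⟨hxc, hx⟩)
  have huniv : (univ : Finset V) = (C ∪ D) ∪ R := (union_sdiff_of_subset (subset_univ _)).symm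
  have hdeg : G.degree x = ((C ∪ D).filter (G.Adj x)).card + (R.filter (G.Adj x)).card := by
    rw [SimpleGraph.degree, SimpleGraph.neighborFinset_eq_filter, huniv, filter_union]
    exact card_union_of_disjoint (Disjoint.mono (filter_subset _ _) (filter_subset _ _)
      (disjoint_sdiff))
  have hCD : ((C ∪ D).filter (G.Adj x)).card = C.card - 1 + (if x = u then 1 else 0) := by
    have : (C ∪ D).filter (G.Adj x) = ((C ∪ D).erase x).filter (G.Adj x) := by
      ext y
      simp only [mem_filter, mem_erase]
      exact ⟨fun ⟨hy, ha⟩ => ⟨⟨(G.ne_of_adj ha).symm, hy⟩, ha⟩, fun ⟨⟨_, hy⟩, ha⟩ => ⟨hy, ha⟩⟩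
    rw [this]
    exact hinU
  rw [hdeg, hCD, hex]

theorem stmt_11 {V : Type*} [Fintype V] [DecidableEq V] (G : SimpleGraph V)
    [DecidableRel G.Adj]
    (Cs Ct : Finset V) (hdisj : Disjoint Cs Ct)
    (I : ℕ) (hCs : Cs.card = I) (hCt : Ct.card = I)
    (hcliqS : G.IsClique (Cs : Set V)) (hcliqT : G.IsClique (Ct : Set V))
    (u v : V) (huS : u ∈ Cs) (hvT : v ∈ Ct) (huv : G.Adj u v)
    (hcross : ∀ x ∈ Cs, ∀ y ∈ Ct, G.Adj x y → x = u ∧ y = v)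
    (c o : V) (hc : c ∈ Cs) (ho : o ∈ Ct)
    (hcadj : ∃ w, w ∉ Cs ∪ Ct ∧ G.Adj c w)
    (hoadj : ∃ w, w ∉ Cs ∪ Ct ∧ G.Adj o w)
    (hSout : ((Cs ×ˢ (Finset.univ \ (Cs ∪ Ct))).filter (fun pr => G.Adj pr.1 pr.2)).card = 1)
    (hTout : ((Ct ×ˢ (Finset.univ \ (Cs ∪ Ct))).filter (fun pr => G.Adj pr.1 pr.2)).card = 1)
    (hI5 : 5 ≤ I) (hIn : (I : ℝ) < (Fintype.card V : ℝ) / 4) :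
    commPhi G (Cs ∪ Ct) < commPhi G Cs + commPhi G Ct := by
  have hIR : (5:ℝ) ≤ (I:ℝ) := by exact_mod_cast hI5
  have hN : 4*(I:ℝ) ≤ (Fintype.card V : ℝ) - 1 := by
    have h1 : (4*I:ℕ) < Fintype.card V := by
      have : (4*I:ℝ) < (Fintype.card V : ℝ) := by push_cast; linarith
      exact_mod_cast this
    have : (4*I+1:ℕ) ≤ Fintype.card V := h1
    have := (Nat.cast_le (α := ℝ)).2 this
    push_cast at this ⊢; linarith
  -- Ct-side hypotheses
  have hcross' : ∀ x ∈ Ct, ∀ y ∈ Cs, G.Adj x y → x = v ∧ y = u := by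
    intro x hx y hy h
    obtain ⟨h1, h2⟩ := hcross y hy x hx h.symm
    exact ⟨h2, h1⟩
  have hUC : Ct ∪ Cs = Cs ∪ Ct := union_comm _ _
  have hoadj' : ∃ w, w ∉ Ct ∪ Cs ∧ G.Adj o w := by rw [hUC]; exact hoadj
  have hTout' : ((Ct ×ˢ (univ \ (Ct ∪ Cs))).filter (fun pr => G.Adj pr.1 pr.2)).card = 1 := by
    rw [hUC]; exact hTout
  have hS := fun x hx => sideCounts G Cs Ct hdisj hcliqS u v huS hvT huv hcross c hc hcadj hSout x hx
  have hT := fun x hx => sideCounts G Ct Cs hdisj.symm hcliqT v u hvT huS huv.symm hcross' o ho hoadj' hTout' x hx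
  have hCsne : Cs.Nonempty := card_pos.1 (by omega)
  have hCtne : Ct.Nonempty := card_pos.1 (by omega)
  have hc2 : ((Cs ∪ Ct).card : ℝ) - 1 = 2*(I:ℝ) - 1 := by
    rw [card_union_of_disjoint hdisj, hCs, hCt]; push_cast; ring
  have hc1s : ((Cs).card : ℝ) - 1 = (I:ℝ) - 1 := by rw [hCs]
  have hc1t : ((Ct).card : ℝ) - 1 = (I:ℝ) - 1 := by rw [hCt]
  unfold commPhi
  rw [Finset.sum_union hdisj]
  refine add_lt_add (Finset.sum_lt_sum_of_nonempty hCsne ?_) (Finset.sum_lt_sum_of_nonempty hCtne ?_)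
  · intro x hx
    obtain ⟨hin, hinU, hd⟩ := hS x hx
    rw [hCs] at hin hinU hd
    rw [hc2, hc1s]
    have hwS : (innerDeg G x Cs : ℝ) = (I:ℝ) - 1 := by
      rw [hin, Nat.cast_sub (by omega)]; norm_num
    rw [hwS]
    by_cases hxu : x = u
    · rw [if_pos hxu] at hinU
      by_cases hxc : x = c
      · rw [if_pos hxu, if_pos hxc] at hd
        have hdR : (G.degree x : ℝ) = (I:ℝ) + 1 := by
          have : G.degree x = I + 1 := by omega
          rw [this]; push_cast; ring
        have hwU : (innerDeg G x (Cs ∪ Ct) : ℝ) = (I:ℝ) := by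
          have : innerDeg G x (Cs ∪ Ct) = I := by omega
          rw [this]
        rw [hdR, hwU]
        exact termLt _ _ _ _ hIR hN (Or.inr (Or.inr (Or.inr ⟨rfl, rfl⟩)))
      · rw [if_pos hxu, if_neg hxc] at hd
        have hdR : (G.degree x : ℝ) = (I:ℝ) := by
          have : G.degree x = I := by omega
          rw [this]
        have hwU : (innerDeg G x (Cs ∪ Ct) : ℝ) = (I:ℝ) := by
          have : innerDeg G x (Cs ∪ Ct) = I := by omega
          rw [this]
        rw [hdR, hwU]
        exact termLt _ _ _ _ hIR hN (Or.inr (Or.inl ⟨rfl, rfl⟩))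
    · rw [if_neg hxu] at hinU
      by_cases hxc : x = c
      · rw [if_neg hxu, if_pos hxc] at hd
        have hdR : (G.degree x : ℝ) = (I:ℝ) := by
          have : G.degree x = I := by omega
          rw [this]
        have hwU : (innerDeg G x (Cs ∪ Ct) : ℝ) = (I:ℝ) - 1 := by
          have : innerDeg G x (Cs ∪ Ct) = I - 1 := by omega
          rw [this, Nat.cast_sub (by omega)]; norm_num
        rw [hdR, hwU]
        exact termLt _ _ _ _ hIR hN (Or.inr (Or.inr (Or.inl ⟨rfl, rfl⟩)))
      · rw [if_neg hxu, if_neg hxc] at hd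
        have hdR : (G.degree x : ℝ) = (I:ℝ) - 1 := by
          have : G.degree x = I - 1 := by omega
          rw [this, Nat.cast_sub (by omega)]; norm_num
        have hwU : (innerDeg G x (Cs ∪ Ct) : ℝ) = (I:ℝ) - 1 := by
          have : innerDeg G x (Cs ∪ Ct) = I - 1 := by omega
          rw [this, Nat.cast_sub (by omega)]; norm_num
        rw [hdR, hwU]
        exact termLt _ _ _ _ hIR hN (Or.inl ⟨rfl, rfl⟩)
  · intro x hx
    obtain ⟨hin, hinU, hd⟩ := hT x hx
    rw [hUC] at hinU
    rw [hCt] at hin hinU hd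
    rw [hc2, hc1t]
    have hwS : (innerDeg G x Ct : ℝ) = (I:ℝ) - 1 := by
      rw [hin, Nat.cast_sub (by omega)]; norm_num
    rw [hwS]
    by_cases hxu : x = v
    · rw [if_pos hxu] at hinU
      by_cases hxc : x = o
      · rw [if_pos hxu, if_pos hxc] at hd
        have hdR : (G.degree x : ℝ) = (I:ℝ) + 1 := by
          have : G.degree x = I + 1 := by omega
          rw [this]; push_cast; ring
        have hwU : (innerDeg G x (Cs ∪ Ct) : ℝ) = (I:ℝ) := by
          have : innerDeg G x (Cs ∪ Ct) = I := by omega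
          rw [this]
        rw [hdR, hwU]
        exact termLt _ _ _ _ hIR hN (Or.inr (Or.inr (Or.inr ⟨rfl, rfl⟩)))
      · rw [if_pos hxu, if_neg hxc] at hd
        have hdR : (G.degree x : ℝ) = (I:ℝ) := by
          have : G.degree x = I := by omega
          rw [this]
        have hwU : (innerDeg G x (Cs ∪ Ct) : ℝ) = (I:ℝ) := by
          have : innerDeg G x (Cs ∪ Ct) = I := by omega
          rw [this]
        rw [hdR, hwU]
        exact termLt _ _ _ _ hIR hN (Or.inr (Or.inl ⟨rfl, rfl⟩))
    · rw [if_neg hxu] at hinU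
      by_cases hxc : x = o
      · rw [if_neg hxu, if_pos hxc] at hd
        have hdR : (G.degree x : ℝ) = (I:ℝ) := by
          have : G.degree x = I := by omega
          rw [this]
        have hwU : (innerDeg G x (Cs ∪ Ct) : ℝ) = (I:ℝ) - 1 := by
          have : innerDeg G x (Cs ∪ Ct) = I - 1 := by omega
          rw [this, Nat.cast_sub (by omega)]; norm_num
        rw [hdR, hwU]
        exact termLt _ _ _ _ hIR hN (Or.inr (Or.inr (Or.inl ⟨rfl, rfl⟩)))
      · rw [if_neg hxu, if_neg hxc] at hd
        have hdR : (G.degree x : ℝ) = (I:ℝ) - 1 := by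
          have : G.degree x = I - 1 := by omega
          rw [this, Nat.cast_sub (by omega)]; norm_num
        have hwU : (innerDeg G x (Cs ∪ Ct) : ℝ) = (I:ℝ) - 1 := by
          have : innerDeg G x (Cs ∪ Ct) = I - 1 := by omega
          rw [this, Nat.cast_sub (by omega)]; norm_num
        rw [hdR, hwU]
        exact termLt _ _ _ _ hIR hN (Or.inl ⟨rfl, rfl⟩)
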